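/- In a real inner product space, for x, y and ε ∈ [0,1), x ⊥_D^ε y (i.e., ‖x + λy‖ ≥ √(1−ε²)‖x‖ for all real λ) holds if and only if x ⊥_B^ε y (i.e., ‖x + λy‖² ≥ ‖x‖² − 2ε‖x‖‖λy‖ for all real λ). -/

import Mathlib

open RealInnerProductSpace

private lemma expand_sq {X : Type*} [NormedAddCommGroup X] [InnerProductSpace ℝ X]
    (x y : X) (l : ℝ) :
    ‖x + l • y‖ ^ 2 = ‖x‖ ^ 2 + 2 * (l * ⟪x, y⟫) + l ^ 2 * ‖y‖ ^ 2 := by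
  rw [norm_add_sq_real, real_inner_smul_right, norm_smul, Real.norm_eq_abs, mul_pow, sq_abs]

private lemma bound_to_B {X : Type*} [NormedAddCommGroup X] [InnerProductSpace ℝ X]
    (x y : X) (ε : ℝ) (hb : |⟪x, y⟫| ≤ ε * ‖x‖ * ‖y‖) (l : ℝ) :
    ‖x + l • y‖ ^ 2 ≥ ‖x‖ ^ 2 - 2 * ε * ‖x‖ * ‖l • y‖ := by
  rw [expand_sq, norm_smul, Real.norm_eq_abs]
  have h1 : l * ⟪x, y⟫ ≥ -(|l| * |⟪x, y⟫|) := by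
    have := abs_mul l ⟪x, y⟫
    nlinarith [neg_abs_le (l * ⟪x, y⟫)]
  nlinarith [sq_nonneg l, sq_nonneg ‖y‖, abs_nonneg l, mul_le_mul_of_nonneg_left hb (abs_nonneg l)]

theorem approx_orth_coincide_inner {X : Type*} [NormedAddCommGroup X] [InnerProductSpace ℝ X]
    (x y : X) (ε : ℝ) (hε0 : 0 ≤ ε) (hε1 : ε < 1) :
    (∀ l : ℝ, ‖x + l • y‖ ≥ Real.sqrt (1 - ε ^ 2) * ‖x‖) ↔
      (∀ l : ℝ, ‖x + l • y‖ ^ 2 ≥ ‖x‖ ^ 2 - 2 * ε * ‖x‖ * ‖l • y‖) := by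
  have hεsq : (0:ℝ) ≤ 1 - ε ^ 2 := by nlinarith
  have hx : 0 ≤ ‖x‖ := norm_nonneg x
  have hy : 0 ≤ ‖y‖ := norm_nonneg y
  constructor
  · intro hD
    -- derive the inner product bound
    have hb : |⟪x, y⟫| ≤ ε * ‖x‖ * ‖y‖ := by
      by_cases hy0 : y = 0
      · simp [hy0]
      · have hby : 0 < ‖y‖ := norm_pos_iff.mpr hy0
        set l := -(⟪x, y⟫ / ‖y‖ ^ 2) with hl
        have h := hD l
        have hsq : (1 - ε ^ 2) * ‖x‖ ^ 2 ≤ ‖x + l • y‖ ^ 2 := by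
          have h2 : (Real.sqrt (1 - ε ^ 2) * ‖x‖) ^ 2 ≤ ‖x + l • y‖ ^ 2 := by
            apply pow_le_pow_left₀ (by positivity) h
          rwa [mul_pow, Real.sq_sqrt hεsq] at h2
        rw [expand_sq] at hsq
        have hval : ‖x‖ ^ 2 + 2 * (l * ⟪x, y⟫) + l ^ 2 * ‖y‖ ^ 2
            = ‖x‖ ^ 2 - ⟪x, y⟫ ^ 2 / ‖y‖ ^ 2 := by
          rw [hl]; field_simp
          ring
        rw [hval] at hsq
        have hb2 : 0 < ‖y‖ ^ 2 := by positivity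
        have h3 : ⟪x, y⟫ ^ 2 / ‖y‖ ^ 2 ≤ ε ^ 2 * ‖x‖ ^ 2 := by linarith
        have h4 := mul_le_mul_of_nonneg_right h3 (le_of_lt hb2)
        rw [div_mul_cancel₀ _ (ne_of_gt hb2)] at h4
        have hp2 : ⟪x, y⟫ ^ 2 ≤ ε ^ 2 * ‖x‖ ^ 2 * ‖y‖ ^ 2 := by nlinarith
        nlinarith [abs_nonneg (⟪x, y⟫), sq_abs (⟪x, y⟫), mul_nonneg (mul_nonneg hε0 hx) hy]
    exact bound_to_B x y ε hb
  · intro hB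
    have hb : |⟪x, y⟫| ≤ ε * ‖x‖ * ‖y‖ := by
      by_cases hy0 : y = 0
      · simp [hy0]
      · have hby : 0 < ‖y‖ := norm_pos_iff.mpr hy0
        -- for s = ±1 and t > 0 : s⟪x,y⟫ + ε‖x‖‖y‖ + (t/2)‖y‖² ≥ 0
        have key : ∀ s : ℝ, s = 1 ∨ s = -1 →
            0 ≤ s * ⟪x, y⟫ + ε * ‖x‖ * ‖y‖ := by
          intro s hs
          by_contra hc
          push_neg at hc
          set A := s * ⟪x, y⟫ + ε * ‖x‖ * ‖y‖ with hA
          set t := -A / ‖y‖ ^ 2 with ht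
          have ht0 : 0 < t := by
            apply div_pos (by linarith) (by positivity)
          have h := hB (s * t)
          rw [expand_sq, norm_smul, Real.norm_eq_abs] at h
          have habs : |s * t| = t := by
            rcases hs with h1 | h1 <;> simp [h1, abs_of_pos ht0, abs_of_neg (neg_neg_iff_pos.mpr ht0)]
          rw [habs] at h
          have hs2 : s ^ 2 = 1 := by rcases hs with h1 | h1 <;> simp [h1]
          -- h : ‖x‖² + 2*(s*t*⟪x,y⟫) + (s*t)²‖y‖² ≥ ‖x‖² − 2ε‖x‖(t‖y‖)
          -- i.e. 2t*A + t²‖y‖² ≥ 0, with t‖y‖² = −A : 2tA + t(−A) = tA ≥ 0, contra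
          have hty : t * ‖y‖ ^ 2 = -A := by
            rw [ht]; field_simp
          have hid : 2 * (s * t * ⟪x, y⟫) + (s * t) ^ 2 * ‖y‖ ^ 2 + 2 * ε * ‖x‖ * (t * ‖y‖)
              = t * A := by
            rw [mul_pow, hs2, one_mul, hA]; linear_combination t * hty
          nlinarith [mul_pos ht0 (neg_pos.mpr hc)]
        have h1 := key 1 (Or.inl rfl)
        have h2 := key (-1) (Or.inr rfl)
        rw [abs_le]
        constructor <;> nlinarith
    intro l
    have hBB := bound_to_B x y ε hb l
    rw [norm_smul, Real.norm_eq_abs] at hBB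
    have hexp := expand_sq x y l
    have hsq : (1 - ε ^ 2) * ‖x‖ ^ 2 ≤ ‖x + l • y‖ ^ 2 := by
      nlinarith [sq_nonneg (|l| * ‖y‖ - ε * ‖x‖), abs_nonneg l, sq_abs l,
        neg_abs_le (l * ⟪x, y⟫), abs_mul l ⟪x, y⟫,
        mul_le_mul_of_nonneg_left hb (abs_nonneg l)]
    have : Real.sqrt (1 - ε ^ 2) * ‖x‖ = Real.sqrt ((1 - ε ^ 2) * ‖x‖ ^ 2) := by
      rw [Real.sqrt_mul hεsq, Real.sqrt_sq hx]
    rw [this]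
    calc Real.sqrt ((1 - ε ^ 2) * ‖x‖ ^ 2) ≤ Real.sqrt (‖x + l • y‖ ^ 2) :=
          Real.sqrt_le_sqrt hsq
      _ = ‖x + l • y‖ := Real.sqrt_sq (norm_nonneg _)
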